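/- Let Z be a complex Zinbiel algebra containing elements e_1, e_2, …, e_k such that e_1 ∘ e_i = e_{i+1} for all 1 ≤ i ≤ k−1. Then e_i ∘ e_1 = i · e_{i+1} for all 1 ≤ i ≤ k−1. -/
import Mathlib


open Module Submodule

/-- The Zinbiel identity for a bilinear operation `mul` on a complex vector space:
`(x∘y)∘z = x∘(y∘z) + x∘(z∘y)`. -/
def IsZinbiel {Z : Type*} [AddCommGroup Z] [Module ℂ Z] (mul : Z →ₗ[ℂ] Z →ₗ[ℂ] Z) : Prop :=
  ∀ x y z : Z, mul (mul x y) z = mul x (mul y z) + mul x (mul z y)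

/-- In a complex Zinbiel algebra with elements `e_1, …, e_k` satisfying
`e_1 ∘ e_i = e_{i+1}` for `1 ≤ i ≤ k-1`, one has `e_i ∘ e_1 = i • e_{i+1}`
for all `1 ≤ i ≤ k-1`. -/
theorem zinbiel_right_mul_e1
    {Z : Type*} [AddCommGroup Z] [Module ℂ Z]
    (mul : Z →ₗ[ℂ] Z →ₗ[ℂ] Z) (hzin : IsZinbiel mul)
    (k : ℕ) (e : ℕ → Z)
    (he : ∀ i, 1 ≤ i → i ≤ k - 1 → mul (e 1) (e i) = e (i + 1)) :
    ∀ i, 1 ≤ i → i ≤ k - 1 → mul (e i) (e 1) = ((i : ℕ) : ℂ) • e (i + 1) := by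
  intro i
  induction i with
  | zero => intro h; omega
  | succ n ih =>
    intro _ hle
    rcases Nat.eq_zero_or_pos n with hn | hn
    · subst hn
      simpa using he 1 le_rfl (by omega)
    · have h1 : mul (e 1) (e n) = e (n + 1) := he n hn (by omega)
      have h2 : mul (e 1) (e (n + 1)) = e (n + 2) := he (n + 1) (by omega) hle
      have h3 : mul (e n) (e 1) = ((n : ℕ) : ℂ) • e (n + 1) := ih hn (by omega)
      have := hzin (e 1) (e n) (e 1)
      rw [h1, h3, h2] at this
      rw [this, map_smul, h2]
      push_cast
      rw [add_smul, one_smul]
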